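/- arXiv:0903.3004 — 4 statements merged into one kernel-verified Lean document; each statement's English description precedes it below -/
import Mathlib

section
/- The free distance of an (n,k,delta) convolutional code C satisfies d_free(C) <= (n-k)(floor(delta/k)+1) + delta + 1 (the generalized Singleton bound). -/
open Polynomial Matrix Finset

/-- Total Hamming weight of the coefficient vectors of a polynomial vector. -/
noncomputable def wt {F : Type*} [Field F] {n : ℕ} (v : Fin n → Polynomial F) : ℕ :=
  ∑ i, (v i).support.card

/-- Hamming weight of the degree-`j` truncation of a polynomial vector. -/
noncomputable def wtTrunc {F : Type*} [Field F] {n : ℕ} (j : ℕ) (v : Fin n → Polynomial F) : ℕ :=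
  ∑ i, ((v i).support.filter (fun m => m ≤ j)).card

/-- The `j`-th column distance of a convolutional code `C ⊆ F[z]^n`. -/
noncomputable def dcol {F : Type*} [Field F] {n : ℕ} (C : Set (Fin n → Polynomial F)) (j : ℕ) : ℕ :=
  sInf {w | ∃ v ∈ C, (fun i => (v i).coeff 0) ≠ (0 : Fin n → F) ∧ wtTrunc j v = w}

/-- The free distance of a convolutional code `C ⊆ F[z]^n`. -/
noncomputable def dfree {F : Type*} [Field F] {n : ℕ} (C : Set (Fin n → Polynomial F)) : ℕ :=
  sInf {w | ∃ v ∈ C, v ≠ 0 ∧ wt v = w}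

/-- The kernel code of a polynomial parity-check matrix given by its coefficient
matrices `H i`: codewords `v(z)` satisfy `∑ i, H_{m-i} v_i = 0` for all `m`. -/
def kerCode {F : Type*} [Field F] {r n : ℕ} (H : ℕ → Matrix (Fin r) (Fin n) F) :
    Set (Fin n → Polynomial F) :=
  {v | ∀ m : ℕ, ∀ a : Fin r,
    ∑ i ∈ Finset.range (m + 1), (H i).mulVec (fun b => (v b).coeff (m - i)) a = 0}

/-- The image code of an `n × k` polynomial generator matrix. -/
def imCode {F : Type*} [Field F] {n k : ℕ} (G : Matrix (Fin n) (Fin k) (Polynomial F)) :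
    Set (Fin n → Polynomial F) :=
  {v | ∃ u : Fin k → Polynomial F, v = G.mulVec u}

/-- The sliding (truncated, lower block triangular Toeplitz) parity-check matrix `H_j`. -/
def slidingH {F : Type*} [Field F] {r n : ℕ} (H : ℕ → Matrix (Fin r) (Fin n) F) (j : ℕ) :
    Matrix (Fin (j+1) × Fin r) (Fin (j+1) × Fin n) F :=
  fun p q => if q.1.val ≤ p.1.val then H (p.1.val - q.1.val) p.2 q.2 else 0

/-- The sliding parity-check matrix `H_j` with rows and columns flattened. -/
def slidingHFlat {F : Type*} [Field F] {r n : ℕ} (hr : 0 < r) (hn : 0 < n)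
    (H : ℕ → Matrix (Fin r) (Fin n) F) (j : ℕ) :
    Matrix (Fin ((j+1)*r)) (Fin ((j+1)*n)) F :=
  fun a b => if b.val / n ≤ a.val / r then
      H (a.val / r - b.val / n) ⟨a.val % r, Nat.mod_lt _ hr⟩ ⟨b.val % n, Nat.mod_lt _ hn⟩
    else 0

/-- The sliding (truncated, lower block triangular Toeplitz) generator matrix `G_j`. -/
def slidingG {F : Type*} [Field F] {n k : ℕ} (G : ℕ → Matrix (Fin n) (Fin k) F) (j : ℕ) :
    Matrix (Fin (j+1) × Fin n) (Fin (j+1) × Fin k) F :=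
  fun p q => if q.1.val ≤ p.1.val then G (p.1.val - q.1.val) p.2 q.2 else 0

/-- The sliding generator matrix `G_j` with rows and columns flattened. -/
def slidingGFlat {F : Type*} [Field F] {n k : ℕ} (hn : 0 < n) (hk : 0 < k)
    (G : ℕ → Matrix (Fin n) (Fin k) F) (j : ℕ) :
    Matrix (Fin ((j+1)*n)) (Fin ((j+1)*k)) F :=
  fun a b => if b.val / k ≤ a.val / n then
      G (a.val / n - b.val / k) ⟨a.val % n, Nat.mod_lt _ hn⟩ ⟨b.val % k, Nat.mod_lt _ hk⟩
    else 0

section SingletonAux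
variable {F : Type*} [Field F] [DecidableEq F] {n k : ℕ}


/-- Block Singleton bound. -/
lemma block_singleton {F : Type*} [Field F] [DecidableEq F] {ι : Type*} [Fintype ι]
    [DecidableEq ι] (W : Submodule F (ι → F)) (m : ℕ) (hm : 1 ≤ m)
    (hmW : m ≤ Module.finrank F W) :
    ∃ w ∈ W, w ≠ 0 ∧ (Finset.univ.filter fun i => w i ≠ 0).card ≤ Fintype.card ι - m + 1 := by
  have hWle : Module.finrank F W ≤ Fintype.card ι := by
    simpa [Module.finrank_pi] using Submodule.finrank_le W
  have hmι : m ≤ Fintype.card ι := le_trans hmW hWle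
  obtain ⟨T, -, hT⟩ := Finset.exists_subset_card_eq (s := (Finset.univ : Finset ι))
    (n := m - 1) (by simp; omega)
  let φ : W →ₗ[F] ({i // i ∈ T} → F) :=
    { toFun := fun w i => (w : ι → F) i.1
      map_add' := fun a b => rfl
      map_smul' := fun c a => rfl }
  have hrange : Module.finrank F (LinearMap.range φ) ≤ m - 1 := by
    have h1 := Submodule.finrank_le (LinearMap.range φ)
    have h2 : Module.finrank F ({i // i ∈ T} → F) = m - 1 := by
      rw [Module.finrank_pi]
      simpa using hT
    omega
  have hker : 1 ≤ Module.finrank F (LinearMap.ker φ) := by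
    have h := LinearMap.finrank_range_add_finrank_ker φ
    omega
  have hne : LinearMap.ker φ ≠ ⊥ := by
    intro h
    rw [h] at hker
    simp at hker
  obtain ⟨x, hx, hx0⟩ := Submodule.exists_mem_ne_zero_of_ne_bot hne
  refine ⟨(x : ι → F), x.2, ?_, ?_⟩
  · intro h
    exact hx0 (Subtype.ext h)
  · have hsub : (Finset.univ.filter fun i => (x : ι → F) i ≠ 0) ⊆ Finset.univ \ T := by
      intro i hi
      simp only [Finset.mem_filter, Finset.mem_univ, true_and] at hi
      simp only [Finset.mem_sdiff, Finset.mem_univ, true_and]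
      intro hiT
      exact hi (congrFun (LinearMap.mem_ker.mp hx) ⟨i, hiT⟩)
    calc (Finset.univ.filter fun i => (x : ι → F) i ≠ 0).card
        ≤ (Finset.univ \ T).card := Finset.card_le_card hsub
      _ = Fintype.card ι - (m - 1) := by
          rw [Finset.card_sdiff_of_subset (Finset.subset_univ T), hT]; simp
      _ ≤ Fintype.card ι - m + 1 := by omega

/-- coefficient of a product at the sum of degree bounds. -/
lemma coeff_prod_at_sum {R : Type*} [CommSemiring R] {ι : Type*} (s : Finset ι)
    (f : ι → Polynomial R) (d : ι → ℕ) (h : ∀ i ∈ s, (f i).natDegree ≤ d i) :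
    (∏ i ∈ s, f i).coeff (∑ i ∈ s, d i) = ∏ i ∈ s, (f i).coeff (d i) := by
  classical
  induction s using Finset.induction_on with
  | empty => simp
  | @insert a s ha ih =>
    rw [Finset.prod_insert ha, Finset.sum_insert ha, Finset.prod_insert ha,
      Polynomial.coeff_mul_add_eq_of_natDegree_le (h a (Finset.mem_insert_self a s))
        ((Polynomial.natDegree_prod_le s f).trans
          (Finset.sum_le_sum fun i hi => h i (Finset.mem_insert_of_mem hi))),
      ih fun i hi => h i (Finset.mem_insert_of_mem hi)]


/-- From linearly independent columns, extract a row-submatrix with nonzero determinant. -/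
lemma exists_det_ne_zero_of_cols_li {F : Type*} [Field F] [DecidableEq F] {n k : ℕ}
    (A : Matrix (Fin n) (Fin k) F) (h : LinearIndependent F Aᵀ) :
    ∃ s : Fin k ↪ Fin n, (A.submatrix (fun i => s i) id).det ≠ 0 := by
  classical
  have hrank : A.rank = k := by
    rw [← Matrix.rank_transpose]
    exact (show LinearIndependent F Aᵀ.row from h).rank_matrix.trans (Fintype.card_fin k)
  have hspan : Submodule.span F (Set.range A) = ⊤ := by
    apply Submodule.eq_top_of_finrank_eq
    change Module.finrank F (Submodule.span F (Set.range A.row)) = _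
    rw [← Matrix.rank_eq_finrank_span_row, hrank, Module.finrank_pi]
    simp
  obtain ⟨b, hbsub, hbspan, hbind⟩ := exists_linearIndependent F (Set.range A)
  rw [hspan] at hbspan
  have hfin : b.Finite := hbind.setFinite
  have : Fintype b := hfin.fintype
  have hbasis : Module.Basis b F (Fin k → F) := Module.Basis.mk hbind (by rw [← hbspan]; simp [Subtype.range_coe])
  have hcard : Fintype.card b = k := by
    have := Module.finrank_eq_card_basis hbasis
    simp only [Module.finrank_fin_fun] at this
    omega
  let e : Fin k ≃ b := (Fintype.equivFinOfCardEq hcard).symm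
  have hpick : ∀ x : b, ∃ i : Fin n, A i = (x : Fin k → F) := fun x => hbsub x.2
  choose pick hpickspec using hpick
  have hinj : Function.Injective (fun t : Fin k => pick (e t)) := by
    intro t1 t2 h12
    simp only at h12
    have : ((e t1 : b) : Fin k → F) = ((e t2 : b) : Fin k → F) := by
      rw [← hpickspec (e t1), ← hpickspec (e t2), h12]
    exact e.injective (Subtype.ext this)
  refine ⟨⟨fun t => pick (e t), hinj⟩, ?_⟩
  have hrows : LinearIndependent F (fun t : Fin k => (A.submatrix (fun i => pick (e i)) id) t) := by
    have : (fun t : Fin k => (A.submatrix (fun i => pick (e i)) id) t)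
        = fun t : Fin k => ((e t : b) : Fin k → F) := by
      funext t
      exact hpickspec (e t)
    rw [this]
    exact hbind.comp (fun t => e t) (fun a b hab => e.injective (by exact hab))
  have hU := Matrix.linearIndependent_rows_iff_isUnit.mp hrows
  intro hdet
  rw [Matrix.isUnit_iff_isUnit_det] at hU
  simp only [Function.Embedding.coeFn_mk] at hdet
  exact hU.ne_zero hdet

lemma core (hk : 1 ≤ k) (hkn : k < n)
    (G : Matrix (Fin n) (Fin k) (Polynomial F))
    (hfull : ∃ s : Fin k ↪ Fin n, (G.submatrix (fun i => s i) id).det ≠ 0)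
    (hLI : LinearIndependent F
      (fun t : Fin k => fun i : Fin n =>
        (G i t).coeff (Finset.univ.sup fun i' => (G i' t).natDegree))) :
    ∃ v ∈ imCode G, v ≠ 0 ∧
      wt v ≤ (n - k) * ((Finset.univ.sup (fun s : Fin k ↪ Fin n =>
          ((G.submatrix (fun i => s i) id).det).natDegree)) / k + 1)
        + (Finset.univ.sup (fun s : Fin k ↪ Fin n =>
          ((G.submatrix (fun i => s i) id).det).natDegree)) + 1 := by
  classical
  set δG := Finset.univ.sup (fun s : Fin k ↪ Fin n =>
    ((G.submatrix (fun i => s i) id).det).natDegree) with hδG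
  set d : Fin k → ℕ := fun t => Finset.univ.sup fun i => (G i t).natDegree with hd
  set Glc : Matrix (Fin n) (Fin k) F := fun i t => (G i t).coeff (d t) with hGlc
  have hGd : ∀ i t, (G i t).natDegree ≤ d t := by
    intro i t
    simp only [hd]
    exact Finset.le_sup (f := fun i' => (G i' t).natDegree) (Finset.mem_univ i)
  set j : ℕ := δG / k with hj
  -- Step A : ∑ d ≤ δG
  have hLI' : LinearIndependent F Glcᵀ := hLI
  obtain ⟨s, hs⟩ := exists_det_ne_zero_of_cols_li Glc hLI'
  have hcoeff : ((G.submatrix (fun i => s i) id).det).coeff (∑ t, d t)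
      = (Glc.submatrix (fun i => s i) id).det := by
    rw [Matrix.det_apply, Matrix.det_apply, Polynomial.finset_sum_coeff]
    refine Finset.sum_congr rfl fun σ _ => ?_
    rw [Units.smul_def, Units.smul_def, Polynomial.coeff_smul]
    congr 1
    calc (∏ t, (G.submatrix (fun i => s i) id) (σ t) t).coeff (∑ t, d t)
        = ∏ t, ((G.submatrix (fun i => s i) id) (σ t) t).coeff (d t) :=
          coeff_prod_at_sum _ _ _ (fun t _ => hGd _ t)
      _ = ∏ t, (Glc.submatrix (fun i => s i) id) (σ t) t := rfl
  have hD : (∑ t, d t) ≤ δG := by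
    refine le_trans (Polynomial.le_natDegree_of_ne_zero (p := (G.submatrix (fun i => s i) id).det) ?_) ?_
    · rw [hcoeff]; exact hs
    · rw [hδG]
      exact Finset.le_sup (f := fun s : Fin k ↪ Fin n =>
        ((G.submatrix (fun i => s i) id).det).natDegree) (Finset.mem_univ s)
  have hjk : δG < k * (j + 1) := by
    have h0 : k * (j + 1) = k * (δG / k) + k := by rw [hj]; ring
    have h1 := Nat.div_add_mod δG k
    have h2 : δG % k < k := Nat.mod_lt _ (by omega)
    omega
  -- Step B : the linear map
  set e : Fin k → ℕ := fun t => j + 1 - d t with he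
  set pol : (∀ t : Fin k, Fin (e t) → F) → (Fin k → Polynomial F) :=
    fun a t => ∑ m : Fin (e t), Polynomial.C (a t m) * X ^ (m : ℕ) with hpol
  have hpol_coeff : ∀ a t (m : Fin (e t)), (pol a t).coeff (m : ℕ) = a t m := by
    intro a t m
    rw [hpol, Polynomial.finset_sum_coeff]
    rw [Finset.sum_eq_single m]
    · simp
    · intro b _ hb
      simp only [Polynomial.coeff_C_mul, Polynomial.coeff_X_pow]
      rw [if_neg (fun h => hb (Fin.ext h.symm)), mul_zero]
    · simp
  have hpol_deg : ∀ a t, (pol a t).natDegree ≤ j - d t := by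
    intro a t
    refine Polynomial.natDegree_sum_le_of_forall_le _ _ fun m _ => ?_
    refine le_trans (Polynomial.natDegree_mul_le) ?_
    simp only [Polynomial.natDegree_C, Polynomial.natDegree_X_pow, zero_add]
    have hm2 : (m : ℕ) < j + 1 - d t := by simpa [he] using m.2
    omega
  have hpolzero : ∀ a t, e t = 0 → pol a t = 0 := by
    intro a t ht
    rw [hpol]
    have : IsEmpty (Fin (e t)) := by rw [ht]; infer_instance
    simp
  have hvdeg : ∀ a i, ((G.mulVec (pol a)) i).natDegree ≤ j := by
    intro a i
    show (∑ t, G i t * pol a t).natDegree ≤ j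
    refine Polynomial.natDegree_sum_le_of_forall_le _ _ fun t _ => ?_
    by_cases ht : e t = 0
    · rw [hpolzero a t ht, mul_zero]; simp
    · have hdtj : d t ≤ j := by simp only [he] at ht; omega
      refine le_trans (Polynomial.natDegree_mul_le) ?_
      have h1 := hGd i t
      have h2 := hpol_deg a t
      omega
  have hpol_add : ∀ a b, pol (a + b) = pol a + pol b := by
    intro a b
    funext t
    simp [hpol, Polynomial.C_add, add_mul, Finset.sum_add_distrib]
  have hpol_smul : ∀ (c : F) a, pol (c • a) = fun t => Polynomial.C c * pol a t := by
    intro c a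
    funext t
    simp [hpol, Polynomial.C_mul, mul_assoc, Finset.mul_sum]
  set Φ : (∀ t : Fin k, Fin (e t) → F) →ₗ[F] (Fin n × Fin (j + 1) → F) :=
    { toFun := fun a p => ((G.mulVec (pol a)) p.1).coeff (p.2 : ℕ)
      map_add' := by
        intro a b
        funext p
        show ((G.mulVec (pol (a + b))) p.1).coeff (p.2 : ℕ)
          = ((G.mulVec (pol a)) p.1).coeff (p.2 : ℕ) + ((G.mulVec (pol b)) p.1).coeff (p.2 : ℕ)
        rw [hpol_add, Matrix.mulVec_add]
        simp
      map_smul' := by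
        intro c a
        funext p
        simp only [RingHom.id_apply, Pi.smul_apply, smul_eq_mul]
        show ((G.mulVec (pol (c • a))) p.1).coeff (p.2 : ℕ)
          = c * ((G.mulVec (pol a)) p.1).coeff (p.2 : ℕ)
        rw [hpol_smul]
        have : G.mulVec (fun t => Polynomial.C c * pol a t)
            = fun i => Polynomial.C c * (G.mulVec (pol a) i) := by
          funext i
          show ∑ t, G i t * (Polynomial.C c * pol a t)
            = Polynomial.C c * ∑ t, G i t * pol a t
          rw [Finset.mul_sum]
          exact Finset.sum_congr rfl fun t _ => by ring
        rw [this]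
        simp } with hΦ
  have hΦinj : Function.Injective Φ := by
    rw [injective_iff_map_eq_zero]
    intro a ha
    have hv0 : G.mulVec (pol a) = 0 := by
      funext i
      ext m0
      by_cases hm0 : m0 < j + 1
      · have := congrFun ha (i, ⟨m0, hm0⟩)
        simpa [hΦ] using this
      · simp only [Polynomial.coeff_zero, Pi.zero_apply]
        exact Polynomial.coeff_eq_zero_of_natDegree_lt (lt_of_le_of_lt (hvdeg a i) (by omega))
    obtain ⟨s0, hs0⟩ := hfull
    have hsub0 : (G.submatrix (fun i => s0 i) id).mulVec (pol a) = 0 := by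
      funext r
      show ∑ t, G (s0 r) t * pol a t = 0
      exact congrFun hv0 (s0 r)
    have hdet0 : (G.submatrix (fun i => s0 i) id).det • pol a = 0 := by
      have := congrArg (fun v => (G.submatrix (fun i => s0 i) id).adjugate.mulVec v) hsub0
      simpa [Matrix.mulVec_mulVec, Matrix.adjugate_mul, Matrix.smul_mulVec,
        Matrix.one_mulVec] using this
    have hpol0 : pol a = 0 := by
      funext t
      have := congrFun hdet0 t
      simp only [Pi.smul_apply, smul_eq_mul, Pi.zero_apply, mul_eq_zero] at this
      exact this.resolve_left hs0
    funext t m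
    have := hpol_coeff a t m
    rw [hpol0] at this
    simpa using this.symm
  -- Step C : dimension count
  set m : ℕ := ∑ t, e t with hm
  have hdom : Module.finrank F (∀ t : Fin k, Fin (e t) → F) = m := by
    rw [Module.finrank_pi_fintype, hm]
    refine Finset.sum_congr rfl fun t _ => ?_
    simp [Module.finrank_pi]
  have hm1 : k * (j + 1) ≤ (∑ t, d t) + m := by
    have hte : ∀ t : Fin k, j + 1 ≤ d t + e t := by
      intro t
      simp only [he]
      omega
    calc k * (j + 1) = ∑ _t : Fin k, (j + 1) := by
          simp [Finset.sum_const, mul_comm]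
      _ ≤ ∑ t, (d t + e t) := Finset.sum_le_sum fun t _ => hte t
      _ = (∑ t, d t) + m := by rw [Finset.sum_add_distrib, hm]
  have hmpos : 1 ≤ m := by omega
  have hrange : m ≤ Module.finrank F (LinearMap.range Φ) := by
    rw [LinearMap.finrank_range_of_inj hΦinj, hdom]
  obtain ⟨w, hwW, hw0, hwcard⟩ := block_singleton (LinearMap.range Φ) m hmpos hrange
  obtain ⟨a, ha⟩ := hwW
  refine ⟨G.mulVec (pol a), ⟨pol a, rfl⟩, ?_, ?_⟩
  · intro hv0
    apply hw0
    rw [← ha]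
    funext p
    show ((G.mulVec (pol a)) p.1).coeff (p.2 : ℕ) = 0
    rw [hv0]
    simp
  · have hcard_ι : Fintype.card (Fin n × Fin (j + 1)) = n * (j + 1) := by simp
    have hsupp : ∀ i : Fin n, ((G.mulVec (pol a)) i).support.card
        = (Finset.univ.filter fun mf : Fin (j + 1) => w (i, mf) ≠ 0).card := by
      intro i
      have himg : (Finset.univ.filter fun mf : Fin (j + 1) => w (i, mf) ≠ 0).image Fin.val
          = ((G.mulVec (pol a)) i).support := by
        ext m0
        simp only [Finset.mem_image, Finset.mem_filter, Finset.mem_univ, true_and,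
          Polynomial.mem_support_iff]
        constructor
        · rintro ⟨mf, hmf, rfl⟩
          rw [← ha] at hmf
          exact hmf
        · intro hm0
          have hle : m0 < j + 1 :=
            lt_of_le_of_lt (Polynomial.le_natDegree_of_ne_zero hm0)
              (Nat.lt_succ_of_le (hvdeg a i))
          refine ⟨⟨m0, hle⟩, ?_, rfl⟩
          rw [← ha]
          exact hm0
      rw [← himg, Finset.card_image_of_injective _ Fin.val_injective]
    have hfib : (Finset.univ.filter fun p : Fin n × Fin (j + 1) => w p ≠ 0).card
        = ∑ i : Fin n, (Finset.univ.filter fun mf : Fin (j + 1) => w (i, mf) ≠ 0).card := by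
      rw [Finset.card_eq_sum_card_fiberwise (f := Prod.fst) (t := Finset.univ)
        (fun x _ => Finset.mem_univ _)]
      refine Finset.sum_congr rfl fun i _ => ?_
      have himg2 : (Finset.univ.filter fun p : Fin n × Fin (j + 1) => w p ≠ 0).filter
            (fun p => p.1 = i)
          = (Finset.univ.filter fun mf : Fin (j + 1) => w (i, mf) ≠ 0).image
            (fun mf => ((i, mf) : Fin n × Fin (j + 1))) := by
        ext p
        simp only [Finset.mem_filter, Finset.mem_univ, true_and, Finset.mem_image]
        constructor
        · rintro ⟨hw, hp1⟩
          exact ⟨p.2, by rw [← hp1] at *; exact hw, by rw [← hp1]⟩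
        · rintro ⟨mf, hmf, rfl⟩
          exact ⟨hmf, rfl⟩
      rw [himg2, Finset.card_image_of_injective]
      intro x y hxy
      simpa using hxy
    have hwt : wt (G.mulVec (pol a))
        = (Finset.univ.filter fun p : Fin n × Fin (j + 1) => w p ≠ 0).card := by
      rw [wt, hfib]
      exact Finset.sum_congr rfl fun i _ => hsupp i
    rw [hwt]
    rw [hcard_ι] at hwcard
    have hnk : (n - k) * (j + 1) = n * (j + 1) - k * (j + 1) := Nat.sub_mul n k (j + 1)
    have hkn' : k * (j + 1) ≤ n * (j + 1) := Nat.mul_le_mul_right _ (le_of_lt hkn)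
    omega

lemma key (hk : 1 ≤ k) (hkn : k < n) :
    ∀ N : ℕ, ∀ G : Matrix (Fin n) (Fin k) (Polynomial F),
      (∑ t, Finset.univ.sup fun i => (G i t).natDegree) ≤ N →
      (∃ s : Fin k ↪ Fin n, (G.submatrix (fun i => s i) id).det ≠ 0) →
      ∃ v ∈ imCode G, v ≠ 0 ∧
        wt v ≤ (n - k) * ((Finset.univ.sup fun s : Fin k ↪ Fin n =>
            ((G.submatrix (fun i => s i) id).det).natDegree) / k + 1)
          + (Finset.univ.sup fun s : Fin k ↪ Fin n =>
            ((G.submatrix (fun i => s i) id).det).natDegree) + 1 := by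
  intro N
  induction N using Nat.strong_induction_on with
  | _ N IH =>
  intro G hmeas hfull
  by_cases hLI : LinearIndependent F (fun t : Fin k => fun i : Fin n =>
      (G i t).coeff (Finset.univ.sup fun i' => (G i' t).natDegree))
  · exact core hk hkn G hfull hLI
  · obtain ⟨g, hgsum, t1, hgt1⟩ := Fintype.not_linearIndependent_iff.mp hLI
    have hd : ∀ i t, (G i t).natDegree ≤ Finset.univ.sup fun i' => (G i' t).natDegree :=
      fun i t => Finset.le_sup (f := fun i' => (G i' t).natDegree) (Finset.mem_univ i)
    set d : Fin k → ℕ := fun t => Finset.univ.sup fun i => (G i t).natDegree with hdd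
    have hsupp_ne : (Finset.univ.filter fun t => g t ≠ 0).Nonempty :=
      ⟨t1, by simp [hgt1]⟩
    obtain ⟨t0, ht0mem, ht0max⟩ := Finset.exists_max_image _ d hsupp_ne
    have hgt0 : g t0 ≠ 0 := by
      have := (Finset.mem_filter.mp ht0mem).2
      simpa using this
    have ht0max' : ∀ t, g t ≠ 0 → d t ≤ d t0 := by
      intro t ht
      exact ht0max t (by simp [ht])
    set d0 := d t0 with hd0
    set c : Fin k → Polynomial F := fun t => Polynomial.C (g t) * X ^ (d0 - d t) with hc
    set newcol : Fin n → Polynomial F := fun i => ∑ t, c t * G i t with hnewcol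
    set G2 := Matrix.updateCol G t0 newcol with hG2
    have hG2ne : ∀ (i : Fin n) {t : Fin k}, t ≠ t0 → G2 i t = G i t := by
      intro i t ht
      rw [hG2, Matrix.updateCol_ne ht]
    have hG2self : ∀ i : Fin n, G2 i t0 = newcol i := by
      intro i
      rw [hG2, Matrix.updateCol_self]
    -- minors scale by C (g t0)
    have hminor : ∀ s : Fin k ↪ Fin n,
        (G2.submatrix (fun i => s i) id).det
          = Polynomial.C (g t0) * (G.submatrix (fun i => s i) id).det := by
      intro s
      have hsub : G2.submatrix (fun i => s i) id
          = (G.submatrix (fun i => s i) id).updateCol t0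
            (fun r => ∑ t, c t • (G.submatrix (fun i => s i) id) r t) := by
        refine Matrix.ext fun r t => ?_
        by_cases ht : t = t0
        · subst ht
          show G2 (s r) t = _
          rw [hG2self, Matrix.updateCol_self]
          simp [hnewcol, Matrix.submatrix, smul_eq_mul]
        · show G2 (s r) t = _
          rw [hG2ne _ ht, Matrix.updateCol_ne ht]
          rfl
      rw [hsub, Matrix.det_updateCol_sum]
      have hct0 : c t0 = Polynomial.C (g t0) := by
        rw [hc]
        simp [hd0]
      rw [hct0, smul_eq_mul]
    have hfull2 : ∃ s : Fin k ↪ Fin n, (G2.submatrix (fun i => s i) id).det ≠ 0 := by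
      obtain ⟨s, hs⟩ := hfull
      refine ⟨s, ?_⟩
      rw [hminor s]
      exact mul_ne_zero (by simpa using hgt0) hs
    have hδeq : (Finset.univ.sup fun s : Fin k ↪ Fin n =>
          ((G2.submatrix (fun i => s i) id).det).natDegree)
        = Finset.univ.sup fun s : Fin k ↪ Fin n =>
          ((G.submatrix (fun i => s i) id).det).natDegree := by
      refine congrArg _ ?_
      funext s
      rw [hminor s, Polynomial.natDegree_C_mul hgt0]
    -- the linear relation evaluated pointwise
    have hgsum' : ∀ i, ∑ t, g t * (G i t).coeff (d t) = 0 := by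
      intro i
      have := congrFun hgsum i
      simpa [Finset.sum_apply, hdd] using this
    -- vanishing of high coefficients of the new column
    have hcoeffnew : ∀ i, ∀ m0 : ℕ, d0 ≤ m0 → (newcol i).coeff m0 = 0 := by
      intro i m0 hm0
      have hsum : (newcol i).coeff m0 = ∑ t, g t * (G i t).coeff (m0 - d0 + d t) := by
        rw [hnewcol]
        rw [Polynomial.finset_sum_coeff]
        refine Finset.sum_congr rfl fun t _ => ?_
        by_cases hgt : g t = 0
        · simp [hc, hgt]
        · have hdt : d t ≤ d0 := ht0max' t hgt
          rw [hc, mul_assoc, Polynomial.coeff_C_mul]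
          have heq : m0 = (m0 - d0 + d t) + (d0 - d t) := by omega
          conv_lhs => rw [heq]
          rw [Polynomial.coeff_X_pow_mul]
      rcases eq_or_lt_of_le hm0 with heq | hlt
      · rw [hsum, ← hgsum' i]
        refine Finset.sum_congr rfl fun t _ => ?_
        rw [show m0 - d0 + d t = d t by omega]
      · rw [hsum]
        refine Finset.sum_eq_zero fun t _ => ?_
        have hdt : (G i t).natDegree ≤ d t := by
          rw [hdd]
          exact hd i t
        rw [Polynomial.coeff_eq_zero_of_natDegree_lt (by omega), mul_zero]
    -- d0 ≥ 1
    have hd0pos : 1 ≤ d0 := by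
      by_contra hcon
      push_neg at hcon
      have hzero : ∀ i, newcol i = 0 := by
        intro i
        ext m0
        simp only [Polynomial.coeff_zero]
        exact hcoeffnew i m0 (by omega)
      obtain ⟨s, hs⟩ := hfull2
      apply hs
      apply Matrix.det_eq_zero_of_column_eq_zero t0
      intro r
      show G2 (s r) t0 = 0
      rw [hG2self, hzero]
    -- measure decreases
    have hcol2 : ∀ t, t ≠ t0 → (Finset.univ.sup fun i => (G2 i t).natDegree) = d t := by
      intro t ht
      rw [hdd]
      refine congrArg _ ?_
      funext i
      rw [hG2ne _ ht]
    have hcol0 : (Finset.univ.sup fun i => (G2 i t0).natDegree) < d0 := by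
      rw [Finset.sup_lt_iff (by simp only [bot_eq_zero]; omega : (⊥ : ℕ) < d0)]
      intro i _
      rw [hG2self]
      by_cases h0 : newcol i = 0
      · rw [h0]
        rw [Polynomial.natDegree_zero]; exact hd0pos
      · refine lt_of_not_ge fun hge => ?_
        exact h0 (Polynomial.leadingCoeff_eq_zero.mp (hcoeffnew i _ hge))
    have hmeas2 : (∑ t, Finset.univ.sup fun i => (G2 i t).natDegree) < N := by
      have hlt : (∑ t, Finset.univ.sup fun i => (G2 i t).natDegree) < ∑ t, d t := by
        refine Finset.sum_lt_sum (fun t _ => ?_) ⟨t0, Finset.mem_univ t0, ?_⟩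
        · by_cases ht : t = t0
          · subst ht
            exact le_of_lt hcol0
          · rw [hcol2 t ht]
        · exact hcol0
      have hdN : (∑ t, d t) ≤ N := hmeas
      omega
    obtain ⟨v, hvmem, hv0, hvwt⟩ := IH _ hmeas2 G2 le_rfl hfull2
    refine ⟨v, ?_, hv0, ?_⟩
    · obtain ⟨u, rfl⟩ := hvmem
      refine ⟨fun t => (if t = t0 then 0 else u t) + c t * u t0, ?_⟩
      funext i
      have hL : (G2.mulVec u) i = newcol i * u t0 + ∑ t ∈ Finset.univ.erase t0, G i t * u t := by
        show ∑ t, G2 i t * u t = _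
        rw [← Finset.add_sum_erase _ _ (Finset.mem_univ t0)]
        congr 1
        · rw [hG2self i]
        · refine Finset.sum_congr rfl fun t ht => ?_
          rw [hG2ne _ (Finset.ne_of_mem_erase ht)]
      have hR : (G.mulVec fun t => (if t = t0 then 0 else u t) + c t * u t0) i
          = newcol i * u t0 + ∑ t ∈ Finset.univ.erase t0, G i t * u t := by
        show ∑ t, G i t * ((if t = t0 then 0 else u t) + c t * u t0) = _
        have hsplit : ∀ t : Fin k, G i t * ((if t = t0 then 0 else u t) + c t * u t0)
            = (if t = t0 then 0 else G i t * u t) + c t * G i t * u t0 := by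
          intro t
          by_cases ht : t = t0 <;> simp [ht] <;> ring
        rw [Finset.sum_congr rfl fun t _ => hsplit t, Finset.sum_add_distrib, add_comm]
        congr 1
        · calc ∑ t, c t * G i t * u t0 = (∑ t, c t * G i t) * u t0 :=
              (Finset.sum_mul _ _ _).symm
            _ = newcol i * u t0 := by rw [hnewcol]
        · rw [← Finset.add_sum_erase _
            (fun t => if t = t0 then (0 : Polynomial F) else G i t * u t) (Finset.mem_univ t0)]
          rw [if_pos rfl, zero_add]
          refine Finset.sum_congr rfl fun t ht => ?_
          rw [if_neg (Finset.ne_of_mem_erase ht)]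
      rw [hL, ← hR]
    · rw [hδeq] at hvwt
      exact hvwt


end SingletonAux

/-- Generalized Singleton bound: the free distance of an `(n, k, δ)` convolutional code
satisfies `d_free ≤ (n-k)(⌊δ/k⌋ + 1) + δ + 1`. -/
theorem generalized_singleton_bound {F : Type*} [Field F] [DecidableEq F] {n k δ : ℕ}
    (hk : 1 ≤ k) (hkn : k < n)
    (G : Matrix (Fin n) (Fin k) (Polynomial F))
    (hfull : ∃ s : Fin k ↪ Fin n, (G.submatrix (fun i => s i) id).det ≠ 0)
    (hδ : δ = Finset.univ.sup
      (fun s : Fin k ↪ Fin n => ((G.submatrix (fun i => s i) id).det).natDegree)) :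
    dfree (imCode G) ≤ (n - k) * (δ / k + 1) + δ + 1 := by
  subst hδ
  obtain ⟨v, hvmem, hv0, hvwt⟩ := key hk hkn
    (∑ t, Finset.univ.sup fun i => (G i t).natDegree) G le_rfl hfull
  exact le_trans (Nat.sInf_le ⟨v, hvmem, hv0, rfl⟩) hvwt
end

section
/- For any (n,k) convolutional code C and any j >= 0, the j-th column distance satisfies d_j^c(C) <= (n-k)(j+1) + 1. -/
open Polynomial Matrix Finset

lemma exists_rows {F : Type*} [Field F] {n k : ℕ} (G0 : Matrix (Fin n) (Fin k) F)
    (h : G0.rank = k) :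
    ∃ ρ : Fin k → Fin n, Function.Injective ρ ∧ IsUnit (G0.submatrix ρ id) := by
  have hspan : Submodule.span F (Set.range fun a => G0 a) = ⊤ := by
    apply Submodule.eq_top_of_finrank_eq
    change Module.finrank F (Submodule.span F (Set.range G0.row)) = _
    rw [← Matrix.rank_eq_finrank_span_row, h, Module.finrank_fintype_fun_eq_card,
      Fintype.card_fin]
  obtain ⟨b, hbsub, hbspan, hbli⟩ := exists_linearIndependent F (Set.range fun a => G0 a)
  rw [hspan] at hbspan
  have hbfin : b.Finite := (Set.finite_range _).subset hbsub
  haveI : Fintype b := hbfin.fintype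
  have hbasis : Module.Basis b F (Fin k → F) :=
    Module.Basis.mk hbli (by rw [Subtype.range_coe_subtype, Set.setOf_mem_eq, hbspan])
  have hcard : Fintype.card b = k := by
    have := Module.finrank_eq_card_basis hbasis
    rw [Module.finrank_fintype_fun_eq_card, Fintype.card_fin] at this
    omega
  let e : Fin k ≃ b := (Fintype.equivFinOfCardEq hcard).symm
  have hpre : ∀ i : Fin k, ∃ a : Fin n, G0 a = (e i : Fin k → F) := fun i => hbsub (e i).2
  choose ρ hρ using hpre
  refine ⟨ρ, ?_, ?_⟩
  · intro i i' hii
    have : (e i : Fin k → F) = (e i' : Fin k → F) := by rw [← hρ, ← hρ, hii]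
    exact e.injective (Subtype.ext this)
  · rw [← Matrix.linearIndependent_rows_iff_isUnit]
    have : (fun i => (G0.submatrix ρ id) i) = (fun i => ((e i : b) : Fin k → F)) := by
      funext i; ext b'; simp [Matrix.submatrix, ← hρ i]
    change LinearIndependent F (fun i => (G0.submatrix ρ id) i)
    rw [this]
    exact hbli.comp (fun i => e i) (fun i i' h => e.injective h)

noncomputable def seqAux {F : Type*} [Field F] {n k : ℕ} (Minv : Matrix (Fin k) (Fin k) F)
    (Gc : ℕ → Matrix (Fin n) (Fin k) F) (ρ : Fin k → Fin n) (tgt : ℕ → Fin k → F) :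
    ℕ → Fin k → F
  | m => Minv.mulVec (tgt m - fun b =>
      ∑ i : Fin m, (Gc (i.val + 1)).mulVec (seqAux Minv Gc ρ tgt (m - 1 - i.val)) (ρ b))
termination_by m => m
decreasing_by have := i.isLt; omega


/-- Column distance bound: for a rate `k/n` convolutional code (with delay-free
full-rank encoder), `d_j^c ≤ (n-k)(j+1) + 1`. -/
theorem column_distance_bound {F : Type*} [Field F] [DecidableEq F] {n k j : ℕ}
    (hk : 1 ≤ k) (hkn : k < n)
    (G : Matrix (Fin n) (Fin k) (Polynomial F))
    (hG0 : (Matrix.of fun a b => (G a b).coeff 0).rank = k) :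
    dcol (imCode G) j ≤ (n - k) * (j + 1) + 1 := by
  obtain ⟨ρ, hρ, hMu⟩ := exists_rows (Matrix.of fun a b => (G a b).coeff 0) hG0
  set Gc : ℕ → Matrix (Fin n) (Fin k) F := fun i => Matrix.of fun a b => (G a b).coeff i with hGc
  set M : Matrix (Fin k) (Fin k) F := (Gc 0).submatrix ρ id with hMdef
  have hM : IsUnit M := hMu
  have hMM : M * M⁻¹ = 1 := Matrix.mul_nonsing_inv M ((Matrix.isUnit_iff_isUnit_det M).mp hM)
  have hMinv : ∀ y : Fin k → F, M.mulVec (M⁻¹.mulVec y) = y := by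
    intro y; rw [Matrix.mulVec_mulVec, hMM, Matrix.one_mulVec]
  let i0 : Fin k := ⟨0, hk⟩
  set tgt : ℕ → Fin k → F := fun m => if m = 0 then Pi.single i0 1 else 0 with htgt
  set uc : ℕ → Fin k → F := seqAux M⁻¹ Gc ρ tgt with huc
  set u : Fin k → Polynomial F :=
    fun b => ∑ m ∈ Finset.range (j+1), Polynomial.C (uc m b) * Polynomial.X ^ m with hu
  set v : Fin n → Polynomial F := G.mulVec u with hv
  -- coeff of u
  have hucoeff : ∀ b i, i ≤ j → (u b).coeff i = uc i b := by
    intro b i hi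
    rw [hu]
    simp only [Polynomial.finset_sum_coeff, Polynomial.coeff_C_mul, Polynomial.coeff_X_pow,
      mul_ite, mul_one, mul_zero]
    rw [Finset.sum_ite_eq (Finset.range (j+1)) i (fun m => uc m b)]
    simp [Nat.lt_succ_iff, hi]
  -- coefficient formula for v
  have hvcoeff : ∀ (a : Fin n) (m : ℕ), m ≤ j →
      (v a).coeff m = ∑ i ∈ Finset.range (m+1), (Gc i).mulVec (uc (m - i)) a := by
    intro a m hm
    rw [hv]
    show (∑ b, G a b * u b).coeff m = _
    rw [Polynomial.finset_sum_coeff]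
    have : ∀ b, (G a b * u b).coeff m
        = ∑ i ∈ Finset.range (m+1), Gc i a b * uc (m - i) b := by
      intro b
      rw [Polynomial.coeff_mul, Finset.Nat.sum_antidiagonal_eq_sum_range_succ_mk]
      refine Finset.sum_congr rfl fun i hi => ?_
      rw [hucoeff b (m - i) (le_trans (Nat.sub_le _ _) hm)]
      rfl
    simp_rw [this]
    rw [Finset.sum_comm]
    rfl
  -- key: values at selected rows
  have hkey : ∀ (m : ℕ) (b : Fin k), m ≤ j → (v (ρ b)).coeff m = tgt m b := by
    intro m b hm
    rw [hvcoeff (ρ b) m hm, Finset.sum_range_succ']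
    have h1 : ∀ i, (Gc (i+1)).mulVec (uc (m - (i+1))) (ρ b)
        = (Gc (i+1)).mulVec (uc (m - 1 - i)) (ρ b) := by
      intro i
      have hmi : m - (i+1) = m - 1 - i := by omega
      rw [hmi]
    have h2 : (Gc 0).mulVec (uc (m - 0)) (ρ b) = M.mulVec (uc m) b := by
      simp [Matrix.mulVec, dotProduct, hMdef, Matrix.submatrix]
    simp_rw [h1, h2]
    have h3 : M.mulVec (uc m) b = (tgt m - fun b' =>
        ∑ i : Fin m, (Gc (i.val + 1)).mulVec (uc (m - 1 - i.val)) (ρ b')) b := by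
      conv_lhs => rw [huc, seqAux]
      rw [← huc, hMinv]
    rw [h3]
    simp only [Pi.sub_apply]
    rw [Fin.sum_univ_eq_sum_range (fun i => (Gc (i + 1)).mulVec (uc (m - 1 - i)) (ρ b)) m]
    ring

  -- nonzero at time 0
  have hone : (v (ρ i0)).coeff 0 = 1 := by
    rw [hkey 0 i0 (Nat.zero_le j), htgt]
    simp
  -- weight bound pieces
  classical
  set Sρ : Finset (Fin n) := Finset.image ρ Finset.univ with hSρ
  have hScard : Sρ.card = k := by
    rw [hSρ, Finset.card_image_of_injective _ hρ, Finset.card_univ, Fintype.card_fin]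
  have hcompl : Sρᶜ.card = n - k := by
    rw [Finset.card_compl, Fintype.card_fin, hScard]
  have hb : ∀ m, 1 ≤ m → m ≤ j →
      (Finset.univ.filter fun a => (v a).coeff m ≠ 0).card ≤ n - k := by
    intro m h1 h2
    rw [← hcompl]
    apply Finset.card_le_card
    intro a ha
    rw [Finset.mem_filter] at ha
    rw [Finset.mem_compl]
    intro haS
    obtain ⟨b, -, rfl⟩ := Finset.mem_image.mp haS
    apply ha.2
    rw [hkey m b h2, htgt]
    simp only [if_neg (by omega : m ≠ 0)]
    rfl
  have hb0 : (Finset.univ.filter fun a => (v a).coeff 0 ≠ 0).card ≤ (n - k) + 1 := by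
    have hsub : (Finset.univ.filter fun a => (v a).coeff 0 ≠ 0) ⊆ insert (ρ i0) Sρᶜ := by
      intro a ha
      rw [Finset.mem_filter] at ha
      rw [Finset.mem_insert, Finset.mem_compl]
      by_cases haS : a ∈ Sρ
      · left
        obtain ⟨b, -, rfl⟩ := Finset.mem_image.mp haS
        have := ha.2
        rw [hkey 0 b (Nat.zero_le j), htgt] at this
        simp only [if_pos rfl] at this
        have hb : b = i0 := by
          by_contra hbne
          exact this (Pi.single_eq_of_ne hbne 1)
        rw [hb]
      · right; exact haS
    calc (Finset.univ.filter fun a => (v a).coeff 0 ≠ 0).card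
        ≤ (insert (ρ i0) Sρᶜ).card := Finset.card_le_card hsub
      _ ≤ Sρᶜ.card + 1 := Finset.card_insert_le _ _
      _ = (n - k) + 1 := by rw [hcompl]
  have hwt : wtTrunc j v ≤ (n - k) * (j + 1) + 1 := by
    have hfilter : ∀ a : Fin n, (v a).support.filter (fun m => m ≤ j)
        = (Finset.range (j+1)).filter (fun m => (v a).coeff m ≠ 0) := by
      intro a; ext m
      simp only [Finset.mem_filter, Polynomial.mem_support_iff, Finset.mem_range,
        Nat.lt_succ_iff]
      tauto
    have h1 : wtTrunc j v
        = ∑ m ∈ Finset.range (j+1), (Finset.univ.filter fun a => (v a).coeff m ≠ 0).card := by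
      unfold wtTrunc
      simp_rw [hfilter, Finset.card_filter]
      rw [Finset.sum_comm]
    rw [h1, Finset.sum_range_succ']
    have h2 : ∑ i ∈ Finset.range j,
        (Finset.univ.filter fun a => (v a).coeff (i+1) ≠ 0).card ≤ j * (n - k) := by
      calc ∑ i ∈ Finset.range j, (Finset.univ.filter fun a => (v a).coeff (i+1) ≠ 0).card
          ≤ ∑ _i ∈ Finset.range j, (n - k) := by
            apply Finset.sum_le_sum
            intro i hi
            exact hb (i+1) (Nat.succ_le_succ (Nat.zero_le i))
              (Nat.succ_le_of_lt (Finset.mem_range.mp hi))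
        _ = j * (n - k) := by rw [Finset.sum_const, Finset.card_range, smul_eq_mul]
    calc (∑ i ∈ Finset.range j, (Finset.univ.filter fun a => (v a).coeff (i+1) ≠ 0).card)
          + (Finset.univ.filter fun a => (v a).coeff 0 ≠ 0).card
        ≤ j * (n - k) + ((n - k) + 1) := Nat.add_le_add h2 hb0
      _ = (n - k) * (j + 1) + 1 := by ring

  have hne : (fun a => (v a).coeff 0) ≠ (0 : Fin n → F) := by
    intro h
    have h0 := congrFun h (ρ i0)
    rw [hone] at h0
    exact one_ne_zero h0
  have hmem : wtTrunc j v ∈ {w | ∃ v' ∈ imCode G,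
      (fun i => (v' i).coeff 0) ≠ (0 : Fin n → F) ∧ wtTrunc j v' = w} :=
    ⟨v, ⟨u, hv⟩, hne, rfl⟩
  calc dcol (imCode G) j ≤ wtTrunc j v := Nat.sInf_le hmem
    _ ≤ (n - k) * (j + 1) + 1 := hwt
end

section
/- If the j-th column distance of an (n,k) convolutional code attains the maximum value d_j^c(C) = (n-k)(j+1)+1 for some j, then d_i^c(C) = (n-k)(i+1)+1 for all i <= j. -/
open Polynomial Matrix Finset

section Aux

variable {F : Type*} [Field F] [DecidableEq F] {n k : ℕ}

/-- The Hamming weight of the `m`-th coefficient vector. -/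
noncomputable def wtAt (m : ℕ) (v : Fin n → Polynomial F) : ℕ :=
  (Finset.univ.filter fun a => (v a).coeff m ≠ 0).card

lemma wtTrunc_eq_sum (j : ℕ) (v : Fin n → Polynomial F) :
    wtTrunc j v = ∑ m ∈ Finset.range (j + 1), wtAt m v := by
  unfold wtTrunc wtAt
  have h : ∀ a : Fin n, (v a).support.filter (fun m => m ≤ j)
      = (Finset.range (j + 1)).filter fun m => (v a).coeff m ≠ 0 := by
    intro a
    ext m
    simp [Polynomial.mem_support_iff, Nat.lt_succ_iff, and_comm]
  simp only [h, Finset.card_filter]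
  exact Finset.sum_comm

lemma coeff_mulVec (G : Matrix (Fin n) (Fin k) (Polynomial F)) (u : Fin k → Polynomial F)
    (a : Fin n) (m : ℕ) :
    ((G.mulVec u) a).coeff m
      = ∑ b, ∑ p ∈ Finset.HasAntidiagonal.antidiagonal m, (G a b).coeff p.1 * (u b).coeff p.2 := by
  simp [Matrix.mulVec, dotProduct, Polynomial.finset_sum_coeff, Polynomial.coeff_mul]

lemma coeff_mulVec_congr (G : Matrix (Fin n) (Fin k) (Polynomial F))
    {u u' : Fin k → Polynomial F} {t : ℕ}
    (h : ∀ b, ∀ m ≤ t, (u' b).coeff m = (u b).coeff m) (a : Fin n) :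
    ((G.mulVec u') a).coeff t = ((G.mulVec u) a).coeff t := by
  rw [coeff_mulVec, coeff_mulVec]
  refine Finset.sum_congr rfl fun b _ => Finset.sum_congr rfl fun p hp => ?_
  have hp' := Finset.HasAntidiagonal.mem_antidiagonal.mp hp
  rw [h b p.2 (by omega)]

lemma exists_surj_rows (M : Matrix (Fin n) (Fin k) F) (hM : M.rank = k) :
    ∃ S : Finset (Fin n), S.card = k ∧
      ∀ t : Fin n → F, ∃ u : Fin k → F, ∀ s ∈ S, M.mulVec u s = t s := by
  classical
  have hspan : Submodule.span F (Set.range M) = ⊤ := by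
    apply Submodule.eq_top_of_finrank_eq
    have h1 : Mᵀ.rank = k := by rw [Matrix.rank_transpose, hM]
    have h2 := Matrix.rank_eq_finrank_span_cols Mᵀ
    rw [show Mᵀ.col = M from rfl, h1] at h2
    rw [← h2, Module.finrank_fintype_fun_eq_card, Fintype.card_fin]
  obtain ⟨b, hbsub, hbspan, hbli⟩ := exists_linearIndependent F (Set.range M)
  rw [hspan] at hbspan
  have hbfin : b.Finite := (Set.finite_range M).subset hbsub
  haveI := hbfin.fintype
  have hbcard : b.toFinset.card = k := by
    have h3 := finrank_span_set_eq_card hbli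
    rw [hbspan, finrank_top, Module.finrank_fintype_fun_eq_card, Fintype.card_fin] at h3
    omega
  have hpick : ∀ x : b, ∃ a : Fin n, M a = x.1 := fun x => hbsub x.2
  choose f hf using hpick
  set S : Finset (Fin n) := (Finset.univ : Finset b).image f with hSdef
  have hinj : Set.InjOn f (Finset.univ : Finset b) := by
    intro x _ y _ hxy
    have : (x : Fin k → F) = y := by rw [← hf x, ← hf y, hxy]
    exact Subtype.ext this
  have hScard : S.card = k := by
    rw [hSdef, Finset.card_image_of_injOn hinj, Finset.card_univ, ← Set.toFinset_card, hbcard]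
  set A : Matrix {x // x ∈ S} (Fin k) F := fun s c => M s.1 c with hA
  have hker : ∀ u : Fin k → F, A.mulVecLin u = 0 → u = 0 := by
    intro u hu
    have hb0 : ∀ x ∈ b, dotProduct x u = 0 := by
      intro x hx
      have hfx : f ⟨x, hx⟩ ∈ S := Finset.mem_image_of_mem f (Finset.mem_univ _)
      have h4 := congrFun hu ⟨f ⟨x, hx⟩, hfx⟩
      rw [Matrix.mulVecLin_apply] at h4
      simpa [Matrix.mulVecLin_apply, Matrix.mulVec, hA, hf ⟨x, hx⟩] using h4
    let φ : (Fin k → F) →ₗ[F] F :=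
      { toFun := fun x => dotProduct x u
        map_add' := fun x y => by simp [add_dotProduct]
        map_smul' := fun c x => by simp [smul_dotProduct, smul_eq_mul]
      }
    have hφ : ∀ x : Fin k → F, φ x = 0 := by
      intro x
      have hle : Submodule.span F b ≤ LinearMap.ker φ := by
        rw [Submodule.span_le]
        intro y hy
        exact LinearMap.mem_ker.mpr (hb0 y hy)
      rw [hbspan] at hle
      exact LinearMap.mem_ker.mp (hle Submodule.mem_top)
    funext c
    have h5 := hφ (Pi.single c 1)
    simpa [φ, single_dotProduct] using h5
  have hinj' : Function.Injective A.mulVecLin := by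
    rw [← LinearMap.ker_eq_bot, LinearMap.ker_eq_bot']
    intro u hu
    exact hker u hu
  have hcardS : Fintype.card {x // x ∈ S} = k := by
    rw [Fintype.card_coe, hScard]
  have hfr : Module.finrank F (Fin k → F) = Module.finrank F ({x // x ∈ S} → F) := by
    rw [Module.finrank_fintype_fun_eq_card, Module.finrank_fintype_fun_eq_card,
      Fintype.card_fin, hcardS]
  have hsurj : Function.Surjective A.mulVecLin :=
    (LinearMap.injective_iff_surjective_of_finrank_eq_finrank hfr).mp hinj'
  refine ⟨S, hScard, ?_⟩
  intro t
  obtain ⟨u, hu⟩ := hsurj (fun s : {x // x ∈ S} => t s.1)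
  refine ⟨u, fun s hs => ?_⟩
  have h6 := congrFun hu ⟨s, hs⟩
  rw [Matrix.mulVecLin_apply] at h6
  simpa [Matrix.mulVecLin_apply, Matrix.mulVec, hA] using h6

lemma ext_construction (G : Matrix (Fin n) (Fin k) (Polynomial F)) (S : Finset (Fin n))
    (hS : ∀ t : Fin n → F, ∃ e : Fin k → F, ∀ s ∈ S,
      (Matrix.of fun a b => (G a b).coeff 0).mulVec e s = t s)
    (i : ℕ) (d : ℕ) (u : Fin k → Polynomial F) :
    ∃ u' : Fin k → Polynomial F,
      (∀ b, ∀ m ≤ i, (u' b).coeff m = (u b).coeff m) ∧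
      (∀ m, i < m → m ≤ i + d → ∀ s ∈ S, ((G.mulVec u') s).coeff m = 0) := by
  induction d with
  | zero =>
    exact ⟨u, fun b m _ => rfl, fun m h1 h2 => absurd (h1.trans_le h2) (lt_irrefl _)⟩
  | succ d ih =>
    obtain ⟨u', h1, h2⟩ := ih
    set T := i + d + 1 with hT
    obtain ⟨e, he⟩ := hS (fun a => -(((G.mulVec u') a).coeff T))
    set u'' : Fin k → Polynomial F := fun b => u' b + Polynomial.C (e b) * Polynomial.X ^ T
      with hu''def
    have hu'' : ∀ b, ∀ m, m < T → (u'' b).coeff m = (u' b).coeff m := by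
      intro b m hm
      rw [hu''def]
      simp only [Polynomial.coeff_add, Polynomial.coeff_C_mul, Polynomial.coeff_X_pow]
      rw [if_neg (Nat.ne_of_lt hm)]
      ring
    have hlow : ∀ a, ∀ m, m < T → ((G.mulVec u'') a).coeff m = ((G.mulVec u') a).coeff m := by
      intro a m hm
      exact coeff_mulVec_congr G (fun b m' hm' => hu'' b m' (lt_of_le_of_lt hm' hm)) a
    have hB : ∀ a b, ∑ p ∈ Finset.HasAntidiagonal.antidiagonal T,
        (G a b).coeff p.1 * (Polynomial.C (e b) * Polynomial.X ^ T).coeff p.2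
        = (G a b).coeff 0 * e b := by
      intro a b
      rw [Finset.sum_eq_single ((0 : ℕ), T)]
      · simp [Polynomial.coeff_C_mul, Polynomial.coeff_X_pow]
      · rintro ⟨p1, p2⟩ hp hne
        have hp' := Finset.HasAntidiagonal.mem_antidiagonal.mp hp
        have hp2 : p2 ≠ T := fun h =>
          hne (by simp only [Prod.mk.injEq]; exact ⟨by omega, h⟩)
        simp [Polynomial.coeff_C_mul, Polynomial.coeff_X_pow, hp2]
      · intro h
        exact absurd (Finset.HasAntidiagonal.mem_antidiagonal.mpr (by simp)) h
    have hvT : ∀ a, ((G.mulVec u'') a).coeff T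
        = ((G.mulVec u') a).coeff T + ∑ b, (G a b).coeff 0 * e b := by
      intro a
      rw [coeff_mulVec, coeff_mulVec]
      simp only [hu''def, Polynomial.coeff_add, mul_add, Finset.sum_add_distrib]
      congr 1
      exact Finset.sum_congr rfl fun b _ => hB a b
    refine ⟨u'', fun b m hm => by rw [hu'' b m (by omega), h1 b m hm], ?_⟩
    intro m hm1 hm2 s hs
    rcases Nat.lt_or_ge m T with hmT | hmT
    · rw [hlow s m hmT]
      exact h2 m hm1 (by omega) s hs
    · have hmeq : m = T := by omega
      subst hmeq
      rw [hvT s]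
      have hes := he s hs
      have : (Matrix.of fun a b => (G a b).coeff 0).mulVec e s = ∑ b, (G s b).coeff 0 * e b := by
        simp [Matrix.mulVec, dotProduct]
      rw [this] at hes
      rw [hes]
      ring

end Aux

/-- If the `j`-th column distance attains its maximal value `(n-k)(j+1)+1`, then all
previous column distances are maximal as well. -/
theorem column_distance_maximal_downward {F : Type*} [Field F] [DecidableEq F] {n k j : ℕ}
    (hk : 1 ≤ k) (hkn : k < n)
    (G : Matrix (Fin n) (Fin k) (Polynomial F))
    (hG0 : (Matrix.of fun a b => (G a b).coeff 0).rank = k)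
    (hj : dcol (imCode G) j = (n - k) * (j + 1) + 1) :
    ∀ i ≤ j, dcol (imCode G) i = (n - k) * (i + 1) + 1 := by
  intro i hij
  classical
  set M : Matrix (Fin n) (Fin k) F := Matrix.of fun a b => (G a b).coeff 0 with hMdef
  obtain ⟨S, hScard, hS⟩ := exists_surj_rows M hG0
  have hSc : Sᶜ.card = n - k := by
    rw [Finset.card_compl, hScard, Fintype.card_fin]
  have hwtAt : ∀ (v : Fin n → Polynomial F) (m : ℕ),
      (∀ s ∈ S, (v s).coeff m = 0) → wtAt m v ≤ n - k := by
    intro v m h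
    rw [← hSc]
    apply Finset.card_le_card
    intro a ha
    rw [Finset.mem_filter] at ha
    rw [Finset.mem_compl]
    intro haS
    exact ha.2 (h a haS)
  obtain ⟨s0, hs0⟩ : ∃ s0, s0 ∈ S := Finset.card_pos.mp (by rw [hScard]; omega)
  obtain ⟨e0, he0⟩ := hS (fun s => if s = s0 then 1 else 0)
  set u0 : Fin k → Polynomial F := fun b => Polynomial.C (e0 b) with hu0def
  have hbase : ∀ a, ((G.mulVec u0) a).coeff 0 = M.mulVec e0 a := by
    intro a
    rw [coeff_mulVec]
    simp [Matrix.mulVec, dotProduct, hu0def, hMdef]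
  -- upper bound construction at degree i
  obtain ⟨u', hu1, hu2⟩ := ext_construction G S hS 0 i u0
  set v' := G.mulVec u' with hv'def
  have hv0 : ∀ a, (v' a).coeff 0 = M.mulVec e0 a := by
    intro a
    rw [hv'def, coeff_mulVec_congr G (fun b m hm => hu1 b m hm) a]
    exact hbase a
  have hv0s : ∀ s ∈ S, (v' s).coeff 0 = (if s = s0 then 1 else 0) :=
    fun s hs => (hv0 s).trans (he0 s hs)
  have helig : (fun a => (v' a).coeff 0) ≠ (0 : Fin n → F) := by
    intro h
    have h7 := congrFun h s0
    rw [hv0s s0 hs0] at h7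
    simp at h7
  have hwt0 : wtAt 0 v' ≤ n - k + 1 := by
    have hsub : (Finset.univ.filter fun a => (v' a).coeff 0 ≠ 0) ⊆ insert s0 Sᶜ := by
      intro a ha
      rw [Finset.mem_filter] at ha
      rw [Finset.mem_insert, Finset.mem_compl]
      by_cases haS : a ∈ S
      · left
        by_contra hne
        exact ha.2 (by rw [hv0s a haS, if_neg hne])
      · right; exact haS
    calc wtAt 0 v' ≤ (insert s0 Sᶜ).card := Finset.card_le_card hsub
      _ ≤ Sᶜ.card + 1 := Finset.card_insert_le _ _
      _ = n - k + 1 := by rw [hSc]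
  have hupper : wtTrunc i v' ≤ (n - k) * (i + 1) + 1 := by
    rw [wtTrunc_eq_sum, Finset.sum_range_succ']
    have hle1 : ∑ x ∈ Finset.range i, wtAt (x + 1) v' ≤ i * (n - k) := by
      calc ∑ x ∈ Finset.range i, wtAt (x + 1) v'
          ≤ (Finset.range i).card • (n - k) := by
            apply Finset.sum_le_card_nsmul
            intro x hx
            have hx' := Finset.mem_range.mp hx
            exact hwtAt _ _ (hu2 (x + 1) (by omega) (by omega))
        _ = i * (n - k) := by rw [Finset.card_range, smul_eq_mul]
    have harith : i * (n - k) + (n - k + 1) = (n - k) * (i + 1) + 1 := by ring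
    omega
  have hmemi : wtTrunc i v' ∈
      {w | ∃ v ∈ imCode G, (fun a => (v a).coeff 0) ≠ (0 : Fin n → F) ∧ wtTrunc i v = w} :=
    ⟨v', ⟨u', hv'def⟩, helig, rfl⟩
  have hub : dcol (imCode G) i ≤ (n - k) * (i + 1) + 1 :=
    le_trans (Nat.sInf_le hmemi) hupper
  -- lower bound
  have hne : {w | ∃ v ∈ imCode G,
      (fun a => (v a).coeff 0) ≠ (0 : Fin n → F) ∧ wtTrunc i v = w}.Nonempty :=
    ⟨wtTrunc i v', hmemi⟩
  have hmem : ∃ v ∈ imCode G, (fun a => (v a).coeff 0) ≠ (0 : Fin n → F) ∧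
      wtTrunc i v = dcol (imCode G) i := Nat.sInf_mem hne
  obtain ⟨v, ⟨u, huv⟩, hveq, hvwt⟩ := hmem
  subst huv
  obtain ⟨u2, hw1, hw2⟩ := ext_construction G S hS i (j - i) u
  set v2 := G.mulVec u2 with hv2def
  have hagree : ∀ m ≤ i, ∀ a, (v2 a).coeff m = ((G.mulVec u) a).coeff m := by
    intro m hm a
    exact coeff_mulVec_congr G (fun b m' hm' => hw1 b m' (le_trans hm' hm)) a
  have helig2 : (fun a => (v2 a).coeff 0) ≠ (0 : Fin n → F) := by
    intro h
    apply hveq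
    funext a
    have h8 := congrFun h a
    rw [hagree 0 (Nat.zero_le _) a] at h8
    exact h8
  have hwt2 : wtTrunc j v2 ≤ dcol (imCode G) i + (j - i) * (n - k) := by
    rw [wtTrunc_eq_sum]
    have hj1 : j + 1 = (i + 1) + (j - i) := by omega
    rw [hj1, Finset.sum_range_add]
    apply add_le_add
    · have heq : ∑ m ∈ Finset.range (i + 1), wtAt m v2 = wtTrunc i (G.mulVec u) := by
        rw [wtTrunc_eq_sum]
        apply Finset.sum_congr rfl
        intro m hm
        have hm' := Finset.mem_range.mp hm
        unfold wtAt
        congr 1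
        ext a
        simp only [Finset.mem_filter]
        rw [hagree m (by omega) a]
      rw [heq, hvwt]
    · calc ∑ x ∈ Finset.range (j - i), wtAt (i + 1 + x) v2
          ≤ (Finset.range (j - i)).card • (n - k) := by
            apply Finset.sum_le_card_nsmul
            intro x hx
            have hx' := Finset.mem_range.mp hx
            exact hwtAt _ _ (hw2 (i + 1 + x) (by omega) (by omega))
        _ = (j - i) * (n - k) := by rw [Finset.card_range, smul_eq_mul]
  have hmemj : wtTrunc j v2 ∈
      {w | ∃ v ∈ imCode G, (fun a => (v a).coeff 0) ≠ (0 : Fin n → F) ∧ wtTrunc j v = w} :=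
    ⟨v2, ⟨u2, hv2def⟩, helig2, rfl⟩
  have hlb : dcol (imCode G) j ≤ wtTrunc j v2 := Nat.sInf_le hmemj
  rw [hj] at hlb
  have hbig : (n - k) * (j + 1) + 1 ≤ dcol (imCode G) i + (j - i) * (n - k) :=
    le_trans hlb hwt2
  have hAsum : (n - k) * (j + 1) = (n - k) * (i + 1) + (j - i) * (n - k) := by
    have h9 : (i + 1) + (j - i) = j + 1 := by omega
    calc (n - k) * (j + 1) = (n - k) * ((i + 1) + (j - i)) := by rw [h9]
      _ = (n - k) * (i + 1) + (j - i) * (n - k) := by ring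
  set P := (n - k) * (i + 1) with hP
  set Q := (j - i) * (n - k) with hQ
  set R := (n - k) * (j + 1) with hR
  omega
end

section
/- Let C be an (n,k,delta) MDP convolutional code with L = floor(delta/k) + floor(delta/(n-k)), i.e., d_L^c(C) = (n-k)(L+1)+1. Suppose a codeword is sent over an erasure channel and decoding has been correct up to time t-1. If in the window of n-vectors v_t, ..., v_{t+L} at most (L+1)(n-k) symbol positions are erased, then the values at the erased positions within v_t are uniquely determined: any two codeword extensions of the correctly decoded prefix that agree with the received symbols on all unerased positions of the window agree on v_t. -/
open Polynomial Matrix Finset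

private lemma coeff_divX_iter {F : Type*} [Field F] (t : ℕ) (p : Polynomial F) (m : ℕ) :
    (Polynomial.divX^[t] p).coeff m = p.coeff (m + t) := by
  induction t generalizing m p with
  | zero => simp
  | succ t ih =>
    rw [Function.iterate_succ_apply', Polynomial.coeff_divX, ih]
    congr 1
    omega

/-- Erasure decoding with an MDP convolutional code: if decoding was correct up to time
`t - 1` and in the window `v_t, …, v_{t+L}` at most `(L+1)(n-k)` symbols are erased,
then `v_t` is uniquely determined: any two codeword extensions agreeing with the
received symbols on the unerased positions of the window agree at time `t`. -/
theorem mdp_window_erasure_decoding {F : Type*} [Field F] {n k δ ν L : ℕ}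
    (hk : 1 ≤ k) (hkn : k < n)
    (H : ℕ → Matrix (Fin (n - k)) (Fin n) F) (hν : ∀ i, ν < i → H i = 0)
    (hL : L = δ / k + δ / (n - k))
    (hMDP : dcol (kerCode H) L = (n - k) * (L + 1) + 1)
    (t : ℕ) (v w : Fin n → Polynomial F)
    (hv : v ∈ kerCode H) (hw : w ∈ kerCode H)
    (hpast : ∀ m < t, ∀ b : Fin n, (v b).coeff m = (w b).coeff m)
    (E : Finset (Fin (L+1) × Fin n)) (hE : E.card ≤ (L + 1) * (n - k))
    (hagree : ∀ (l : Fin (L+1)) (b : Fin n), (l, b) ∉ E →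
      (v b).coeff (t + l.val) = (w b).coeff (t + l.val)) :
    ∀ b : Fin n, (v b).coeff t = (w b).coeff t := by
  classical
  intro b
  by_contra hb
  set u : Fin n → Polynomial F := fun i => Polynomial.divX^[t] (v i - w i) with hu
  have hucoeff : ∀ i m, (u i).coeff m = (v i).coeff (t + m) - (w i).coeff (t + m) := by
    intro i m
    simp [hu, coeff_divX_iter, Nat.add_comm]
  have huker : u ∈ kerCode H := by
    intro m a
    set g : ℕ → F := fun i => (H i).mulVec (fun c => (v c - w c).coeff (t + m - i)) a with hg
    have h0 : ∀ i, g i = (H i).mulVec (fun c => (v c).coeff (t + m - i)) a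
        - (H i).mulVec (fun c => (w c).coeff (t + m - i)) a := by
      intro i
      simp [hg, Matrix.mulVec, dotProduct, mul_sub, Finset.sum_sub_distrib]
    have htot : ∑ i ∈ Finset.range (t + m + 1), g i = 0 := by
      simp only [h0]
      rw [Finset.sum_sub_distrib, hv (t + m) a, hw (t + m) a, sub_zero]
    have hico : ∑ i ∈ Finset.Ico (m + 1) (t + m + 1), g i = 0 := by
      apply Finset.sum_eq_zero
      intro i hi
      simp only [Finset.mem_Ico] at hi
      have hz : (fun c => (v c - w c).coeff (t + m - i)) = (0 : Fin n → F) := by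
        funext c
        have := hpast (t + m - i) (by omega) c
        simp [this]
      simp only [hg]
      rw [hz]
      simp
    have hsplit : ∑ i ∈ Finset.range (m + 1), g i + ∑ i ∈ Finset.Ico (m + 1) (t + m + 1), g i
        = ∑ i ∈ Finset.range (t + m + 1), g i := by
      rw [Finset.range_eq_Ico, Finset.range_eq_Ico]
      exact Finset.sum_Ico_consecutive _ (by omega) (by omega)
    have hhead : ∀ i ∈ Finset.range (m + 1),
        (H i).mulVec (fun c => (u c).coeff (m - i)) a = g i := by
      intro i hi
      simp only [Finset.mem_range] at hi
      simp only [hg]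
      congr 1
      funext c
      have hidx : t + m - i = t + (m - i) := by omega
      rw [Polynomial.coeff_sub, hucoeff, hidx]
    rw [Finset.sum_congr rfl hhead]
    rw [hico, add_zero] at hsplit
    rw [hsplit, htot]
  have hne : (fun i => (u i).coeff 0) ≠ (0 : Fin n → F) := by
    intro h
    apply hb
    have h2 := congrFun h b
    rw [hucoeff] at h2
    simpa [sub_eq_zero] using h2
  have hdle : dcol (kerCode H) L ≤ wtTrunc L u := Nat.sInf_le ⟨u, huker, hne, rfl⟩
  have hwt : wtTrunc L u ≤ E.card := by
    have hsub : (Finset.univ.filter fun p : Fin (L+1) × Fin n => (u p.2).coeff p.1.val ≠ 0) ⊆ E := by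
      rintro ⟨l, i⟩ hp
      simp only [Finset.mem_filter] at hp
      by_contra hpe
      apply hp.2
      rw [hucoeff, hagree l i hpe, sub_self]
    have hcard : ∀ i : Fin n, ((u i).support.filter (fun m => m ≤ L)).card
        = (Finset.univ.filter fun l : Fin (L+1) => (u i).coeff l.val ≠ 0).card := by
      intro i
      apply Finset.card_bij (fun m hm => (⟨m, by
        simp only [Finset.mem_filter] at hm; omega⟩ : Fin (L+1)))
      · intro m hm
        simp only [Finset.mem_filter, Polynomial.mem_support_iff] at hm ⊢
        exact ⟨Finset.mem_univ _, hm.1⟩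
      · intro m1 h1 m2 h2 h
        simpa using congrArg Fin.val h
      · intro l hl
        simp only [Finset.mem_filter, Finset.mem_univ, true_and] at hl
        exact ⟨l.val, by
          simp only [Finset.mem_filter, Polynomial.mem_support_iff]
          exact ⟨hl, Nat.lt_succ_iff.mp l.isLt⟩, rfl⟩
    have hprod : (Finset.univ.filter fun p : Fin (L+1) × Fin n => (u p.2).coeff p.1.val ≠ 0).card
        = ∑ i : Fin n, (Finset.univ.filter fun l : Fin (L+1) => (u i).coeff l.val ≠ 0).card := by
      rw [Finset.card_filter, Fintype.sum_prod_type, Finset.sum_comm]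
      exact Finset.sum_congr rfl fun i _ => (Finset.card_filter _ _).symm
    calc wtTrunc L u = ∑ i : Fin n, ((u i).support.filter (fun m => m ≤ L)).card := rfl
      _ = (Finset.univ.filter fun p : Fin (L+1) × Fin n => (u p.2).coeff p.1.val ≠ 0).card := by
          rw [hprod]; exact Finset.sum_congr rfl fun i _ => hcard i
      _ ≤ E.card := Finset.card_le_card hsub
  rw [hMDP] at hdle
  have h1 : (n - k) * (L + 1) + 1 ≤ (L + 1) * (n - k) :=
    le_trans hdle (le_trans hwt hE)
  rw [mul_comm] at h1
  omega
end
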